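/- Let L be a Hermitian lattice of signature (1,n) over O_F, ℓ ∈ L a primitive vector with ⟨ℓ,ℓ⟩ < 0, K_ℓ = ℓ^⊥ ∩ L, Div(ℓ) the ideal generated by {⟨v,ℓ⟩ : v ∈ L}, and I_ℓ = ⟨ℓ,ℓ⟩·Div(ℓ)^{-1} ⊆ O_F. Then there is an isomorphism of O_F-modules L / (ℓO_F ⊕ K_ℓ) ≅ O_F / I_ℓ. -/

import Mathlib

open NumberField

/-- A Hermitian form on a module `M` over a ring `R` with respect to a ring
endomorphism `σ` of `R` (the conjugation). -/
def IsHermitianForm (R : Type*) [CommRing R] (σ : R →+* R)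
    {M : Type*} [AddCommGroup M] [Module R M] (h : M → M → R) : Prop :=
  (∀ x y z : M, h (x + y) z = h x z + h y z) ∧
  (∀ (r : R) (x y : M), h (r • x) y = r * h x y) ∧
  (∀ x y : M, h y x = σ (h x y))

/-- The orthogonal complement `ℓ^⊥ ∩ L = {w ∈ L ∣ ⟨w,ℓ⟩ = 0}` of a vector `ℓ`. -/
def orthComplement {R : Type*} [CommRing R] {σ : R →+* R}
    {M : Type*} [AddCommGroup M] [Module R M] {h : M → M → R}
    (hherm : IsHermitianForm R σ h) (ℓ : M) : Submodule R M where
  carrier := {w | h w ℓ = 0}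
  add_mem' := by
    intro a b ha hb
    show h (a + b) ℓ = 0
    rw [hherm.1, ha, hb, add_zero]
  zero_mem' := by
    have h0 := hherm.1 0 0 ℓ
    simp only [add_zero] at h0
    show h 0 ℓ = 0
    linear_combination -h0
  smul_mem' := by
    intro r a ha
    show h (r • a) ℓ = 0
    rw [hherm.2.1, ha, mul_zero]

/-- The ideal `Div(ℓ)` generated by `{⟨v,ℓ⟩ : v ∈ L}`. -/
def divIdeal {R : Type*} [CommRing R]
    {M : Type*} [AddCommGroup M] [Module R M] (h : M → M → R) (ℓ : M) : Ideal R :=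
  Ideal.span {r : R | ∃ v : M, h v ℓ = r}

open UniqueFactorizationMonoid in
/-- In a Dedekind domain, any nonzero ideal `I` contains an element `x` that
generates `I` up to a factor coprime to a given nonzero ideal `E`. -/
lemma lemA {R : Type*} [CommRing R] [IsDomain R] [IsDedekindDomain R]
    (I E : Ideal R) (hI : I ≠ ⊥) (hE : E ≠ ⊥) :
    ∃ x ∈ I, Ideal.span {x} ⊔ E * I = I := by
  classical
  set s : Finset (Ideal R) := (factors E).toFinset with hs
  have hsp : ∀ P ∈ s, Prime P := fun P hP => prime_of_factor P (Multiset.mem_toFinset.mp hP)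
  have hIPlt : ∀ P ∈ s, I * P < I := by
    intro P hP
    refine lt_of_le_of_ne Ideal.mul_le_left (fun heq => ?_)
    have : I * P = I * ⊤ := by rwa [Ideal.mul_top]
    exact (hsp P hP).2.1 (Ideal.isUnit_iff.mpr (mul_left_cancel₀ hI this))
  have hxex : ∀ P : Ideal R, ∃ x, P ∈ s → x ∈ I ∧ x ∉ I * P := by
    intro P
    by_cases hP : P ∈ s
    · obtain ⟨x, hx1, hx2⟩ := SetLike.exists_of_lt (hIPlt P hP)
      exact ⟨x, fun _ => ⟨hx1, hx2⟩⟩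
    · exact ⟨0, fun h => absurd h hP⟩
  have hyex : ∀ P : Ideal R, ∃ y, P ∈ s →
      y ∈ ∏ Q ∈ s.erase P, Q ∧ y ∉ P := by
    intro P
    by_cases hP : P ∈ s
    · have hPp : P.IsPrime := Ideal.isPrime_of_prime (hsp P hP)
      have hnle : ¬(∏ Q ∈ s.erase P, Q) ≤ P := by
        intro hle
        obtain ⟨Q, hQ, hQP⟩ := (hPp.prod_le).mp hle
        have hQs := Finset.mem_of_mem_erase hQ
        have hQmax : Q.IsMaximal :=
          Ideal.IsPrime.isMaximal (Ideal.isPrime_of_prime (hsp Q hQs)) (hsp Q hQs).ne_zero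
        exact (Finset.ne_of_mem_erase hQ) (hQmax.eq_of_le hPp.ne_top hQP)
      obtain ⟨y, hy1, hy2⟩ := SetLike.not_le_iff_exists.mp hnle
      exact ⟨y, fun _ => ⟨hy1, hy2⟩⟩
    · exact ⟨0, fun h => absurd h hP⟩
  choose x hx using hxex
  choose y hy using hyex
  set b : R := ∑ P ∈ s, x P * y P with hb
  have hbI : b ∈ I := Ideal.sum_mem I fun P hP => I.mul_mem_right _ ((hx P hP).1)
  have hbP : ∀ P ∈ s, b ∉ I * P := by
    intro P hP hmem
    have hsum : ∑ Q ∈ s.erase P, x Q * y Q ∈ I * P := by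
      refine Ideal.sum_mem _ fun Q hQ => ?_
      have hQs := Finset.mem_of_mem_erase hQ
      have hPQ : P ∈ s.erase Q :=
        Finset.mem_erase.mpr ⟨(Finset.ne_of_mem_erase hQ).symm, hP⟩
      have hyP : y Q ∈ P :=
        Ideal.le_of_dvd (Finset.dvd_prod_of_mem _ hPQ) ((hy Q hQs).1)
      exact Ideal.mul_mem_mul ((hx Q hQs).1) hyP
    have hterm : x P * y P ∈ I * P := by
      have hadd := Finset.add_sum_erase s (fun Q => x Q * y Q) hP
      have : x P * y P = b - ∑ Q ∈ s.erase P, x Q * y Q := by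
        rw [hb, ← hadd]; ring
      rw [this]; exact Submodule.sub_mem _ hmem hsum
    obtain ⟨C, hC⟩ : I ∣ Ideal.span {x P} :=
      Ideal.dvd_iff_le.mpr ((Ideal.span_singleton_le_iff_mem _).mpr (hx P hP).1)
    have hPC : ¬ P ∣ C := by
      intro hd
      apply (hx P hP).2
      have : I * P ∣ Ideal.span {x P} := by
        rw [hC]; exact mul_dvd_mul_left I hd
      exact (Ideal.span_singleton_le_iff_mem _).mp (Ideal.le_of_dvd this)
    have hdvd : I * P ∣ Ideal.span {x P} * Ideal.span {y P} := by
      rw [Ideal.span_singleton_mul_span_singleton]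
      exact Ideal.dvd_iff_le.mpr ((Ideal.span_singleton_le_iff_mem _).mpr hterm)
    rw [hC, mul_assoc] at hdvd
    have hPd : P ∣ C * Ideal.span {y P} := (mul_dvd_mul_iff_left hI).mp hdvd
    rcases (hsp P hP).2.2 _ _ hPd with h1 | h2
    · exact hPC h1
    · exact (hy P hP).2 ((Ideal.span_singleton_le_iff_mem _).mp (Ideal.le_of_dvd h2))
  refine ⟨b, hbI, ?_⟩
  have hle : Ideal.span {b} ⊔ E * I ≤ I :=
    sup_le ((Ideal.span_singleton_le_iff_mem _).mpr hbI) Ideal.mul_le_right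
  refine le_antisymm hle ?_
  obtain ⟨C, hC⟩ : I ∣ Ideal.span {b} ⊔ E * I := Ideal.dvd_iff_le.mpr hle
  rcases eq_or_ne C ⊤ with hCt | hCt
  · rw [hC, hCt, Ideal.mul_top]
  obtain ⟨P, hPmax, hCP⟩ := Ideal.exists_le_maximal C hCt
  exfalso
  have hJP : Ideal.span {b} ⊔ E * I ≤ I * P := by
    rw [hC]; exact Ideal.mul_mono_right hCP
  have hPE : P ∣ E := by
    have : I * P ∣ E * I := Ideal.dvd_iff_le.mpr (le_trans le_sup_right hJP)
    rw [mul_comm E I] at this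
    exact (mul_dvd_mul_iff_left hI).mp this
  have hPbot : P ≠ ⊥ := by
    intro h0
    exact hE (le_bot_iff.mp (h0 ▸ Ideal.le_of_dvd hPE))
  have hPprime : Prime P := Ideal.prime_of_isPrime hPbot hPmax.isPrime
  obtain ⟨Q, hQ, hPQ⟩ := exists_mem_factors_of_dvd hE hPprime.irreducible hPE
  have hPs : P ∈ s := by
    rw [hs, Multiset.mem_toFinset]
    rwa [associated_iff_eq.mp hPQ]
  exact hbP P hPs (hJP (le_sup_left (a := Ideal.span {b}) (Ideal.mem_span_singleton_self b)))

set_option synthInstance.maxHeartbeats 1000000 in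
set_option maxHeartbeats 1000000 in
/-- Let `L` be a Hermitian lattice of signature `(1,n)` over the ring of
integers `𝓞 F` of an imaginary quadratic field `F`, `ℓ ∈ L` a primitive vector
with `⟨ℓ,ℓ⟩ < 0`, `K_ℓ = ℓ^⊥ ∩ L`, `Div(ℓ)` the ideal generated by
`{⟨v,ℓ⟩ : v ∈ L}`, and `I_ℓ = ⟨ℓ,ℓ⟩·Div(ℓ)^{-1}` (the integral ideal with
`I_ℓ · Div(ℓ) = (⟨ℓ,ℓ⟩)`).  Then `L/(ℓ𝓞 F ⊕ K_ℓ) ≅ 𝓞 F / I_ℓ` as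
`𝓞 F`-modules. -/
theorem quotient_by_split_sublattice_iso
    (F : Type) [Field F] [NumberField F]
    (hdeg : Module.finrank ℚ F = 2)
    (himag : ∀ v : InfinitePlace F, v.IsComplex)
    (σ : 𝓞 F →+* 𝓞 F) (ι : F →+* ℂ)
    (hσ : ∀ x : 𝓞 F, ι (algebraMap (𝓞 F) F (σ x)) = starRingEnd ℂ (ι (algebraMap (𝓞 F) F x)))
    (M : Type) [AddCommGroup M] [Module (𝓞 F) M]
    [Module.Free (𝓞 F) M] [Module.Finite (𝓞 F) M]
    (h : M → M → 𝓞 F) (hherm : IsHermitianForm (𝓞 F) σ h)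
    (n : ℕ)
    -- signature `(1,n)`: rank `n+1`, and there is a positive vector whose
    -- orthogonal complement is negative definite
    (hrank : Module.finrank (𝓞 F) M = n + 1)
    (hsig : ∃ v : M, 0 < (ι (algebraMap (𝓞 F) F (h v v))).re ∧
      ∀ w : M, h w v = 0 → w ≠ 0 → (ι (algebraMap (𝓞 F) F (h w w))).re < 0)
    (ℓ : M)
    (hprim : ∀ (r : 𝓞 F) (x : M), ℓ = r • x → IsUnit r)
    (hneg : (ι (algebraMap (𝓞 F) F (h ℓ ℓ))).re < 0)
    (I : Ideal (𝓞 F))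
    (hI : I * divIdeal h ℓ = Ideal.span {h ℓ ℓ}) :
    Nonempty ((M ⧸ (Submodule.span (𝓞 F) {ℓ} ⊔ orthComplement hherm ℓ))
      ≃ₗ[𝓞 F] ((𝓞 F) ⧸ I)) := by
  classical
  set a : 𝓞 F := h ℓ ℓ with ha_def
  have ha : a ≠ 0 := by
    intro h0
    rw [h0] at hneg
    simp at hneg
  set D : Ideal (𝓞 F) := divIdeal h ℓ with hD_def
  have hmemD : ∀ v : M, h v ℓ ∈ D := fun v => Ideal.subset_span ⟨v, rfl⟩
  -- the linear functional `ψ = ⟨·, ℓ⟩`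
  let ψ : M →ₗ[𝓞 F] 𝓞 F :=
    { toFun := fun v => h v ℓ
      map_add' := fun v w => hherm.1 v w ℓ
      map_smul' := fun r v => hherm.2.1 r v ℓ }
  have hDrange : ∀ r ∈ D, ∃ v : M, h v ℓ = r := by
    intro r hr
    have hle : D ≤ LinearMap.range ψ := by
      rw [hD_def, divIdeal]
      refine Ideal.span_le.mpr ?_
      rintro z ⟨v, hv⟩
      exact ⟨v, hv⟩
    exact hle hr
  have hEbot : Ideal.span {a} ≠ (⊥ : Ideal (𝓞 F)) := by
    simpa [Ideal.span_singleton_eq_bot] using ha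
  have hIbot : I ≠ ⊥ := by
    intro h0
    rw [h0, Ideal.bot_mul] at hI
    exact hEbot hI.symm
  obtain ⟨x₀, hx₀I, hx₀⟩ := lemA I (Ideal.span {a}) hIbot hEbot
  obtain ⟨C, hC⟩ : I ∣ Ideal.span {x₀} :=
    Ideal.dvd_iff_le.mpr ((Ideal.span_singleton_le_iff_mem _).mpr hx₀I)
  have hcop : IsCoprime (Ideal.span {a}) C := by
    rw [Ideal.isCoprime_iff_sup_eq]
    by_contra hne
    obtain ⟨P, hPmax, hle⟩ := Ideal.exists_le_maximal _ hne
    have h1 : Ideal.span {a} ≤ P := le_trans le_sup_left hle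
    have h2 : C ≤ P := le_trans le_sup_right hle
    have hIle : I ≤ I * P := by
      conv_lhs => rw [← hx₀]
      refine sup_le ?_ ?_
      · rw [hC]; exact Ideal.mul_mono_right h2
      · calc Ideal.span {a} * I ≤ P * I := Ideal.mul_mono_left h1
          _ = I * P := mul_comm _ _
    have heq : I * P = I * ⊤ := by
      rw [Ideal.mul_top]
      exact le_antisymm Ideal.mul_le_left hIle
    exact hPmax.ne_top (mul_left_cancel₀ hIbot heq)
  have hCI : C ⊔ I = ⊤ := by
    rw [eq_top_iff, ← hcop.sup_eq]
    refine sup_le ?_ le_sup_left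
    rw [← hI]
    exact le_trans Ideal.mul_le_left le_sup_right
  -- the division function `q v = x₀ ⟨v,ℓ⟩ / a`
  have hdvd : ∀ v : M, ∃ c, x₀ * h v ℓ = a * c := by
    intro v
    have hmem : x₀ * h v ℓ ∈ Ideal.span {a} := by
      rw [← hI]
      exact Ideal.mul_mem_mul hx₀I (hmemD v)
    obtain ⟨c, hc⟩ := Ideal.mem_span_singleton'.mp hmem
    exact ⟨c, by rw [← hc]; ring⟩
  choose q hq using hdvd
  have hq_add : ∀ v w, q (v + w) = q v + q w := by
    intro v w
    apply mul_left_cancel₀ ha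
    rw [← hq (v + w), hherm.1, mul_add, mul_add, hq v, hq w]
  have hq_smul : ∀ (r : 𝓞 F) (v : M), q (r • v) = r * q v := by
    intro r v
    apply mul_left_cancel₀ ha
    have h1 : x₀ * h (r • v) ℓ = r * (x₀ * h v ℓ) := by
      rw [hherm.2.1]; ring
    rw [← hq (r • v), h1, hq v]; ring
  let g₀ : M →ₗ[𝓞 F] 𝓞 F :=
    { toFun := q
      map_add' := hq_add
      map_smul' := hq_smul }
  let g : M →ₗ[𝓞 F] ((𝓞 F) ⧸ I) := I.mkQ.comp g₀
  have hg : ∀ v : M, g v = I.mkQ (q v) := fun v => rfl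
  -- kernel computation
  have hker : LinearMap.ker g = Submodule.span (𝓞 F) {ℓ} ⊔ orthComplement hherm ℓ := by
    apply le_antisymm
    · intro v hv
      have hqI : q v ∈ I := by
        have := LinearMap.mem_ker.mp hv
        rw [hg v, Submodule.mkQ_apply, Submodule.Quotient.mk_eq_zero] at this
        exact this
      have h1 : Ideal.span {a} * I ∣ Ideal.span {x₀} * Ideal.span {h v ℓ} := by
        rw [Ideal.span_singleton_mul_span_singleton]
        refine Ideal.dvd_iff_le.mpr ((Ideal.span_singleton_le_iff_mem _).mpr ?_)
        rw [hq v]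
        exact Ideal.mul_mem_mul (Ideal.mem_span_singleton_self a) hqI
      rw [hC, mul_assoc, mul_comm (Ideal.span {a}) I] at h1
      have h2 : Ideal.span {a} ∣ C * Ideal.span {h v ℓ} :=
        (mul_dvd_mul_iff_left hIbot).mp h1
      have h3 : Ideal.span {a} ∣ Ideal.span {h v ℓ} := hcop.dvd_of_dvd_mul_left h2
      have h4 : h v ℓ ∈ Ideal.span {a} :=
        Ideal.le_of_dvd h3 (Ideal.mem_span_singleton_self _)
      obtain ⟨c, hc⟩ := Ideal.mem_span_singleton'.mp h4
      have hw : h (v - c • ℓ) ℓ = 0 := by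
        have hadd := hherm.1 (v - c • ℓ) (c • ℓ) ℓ
        rw [sub_add_cancel, hherm.2.1] at hadd
        have : h (v - c • ℓ) ℓ = h v ℓ - c * h ℓ ℓ := by
          rw [hadd]; ring
        rw [this, ← ha_def, ← hc]; ring
      have hvdecomp : v = c • ℓ + (v - c • ℓ) := by abel
      rw [hvdecomp]
      exact Submodule.add_mem_sup
        (Submodule.smul_mem _ c (Submodule.mem_span_singleton_self ℓ)) hw
    · refine sup_le ?_ ?_
      · rw [Submodule.span_le, Set.singleton_subset_iff]
        have hqℓ : q ℓ = x₀ := by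
          apply mul_left_cancel₀ ha
          rw [← hq ℓ, ← ha_def]; ring
        rw [SetLike.mem_coe, LinearMap.mem_ker, hg, hqℓ, Submodule.mkQ_apply,
          Submodule.Quotient.mk_eq_zero]
        exact hx₀I
      · intro w hw
        have hw0 : h w ℓ = 0 := hw
        have hqw : q w = 0 := by
          apply mul_left_cancel₀ ha
          rw [← hq w, hw0]; ring
        rw [LinearMap.mem_ker, hg, hqw, Submodule.mkQ_apply,
          Submodule.Quotient.mk_eq_zero]
        exact zero_mem I
  -- surjectivity
  have hsurj : Function.Surjective g := by
    intro z
    obtain ⟨r, rfl⟩ := Submodule.mkQ_surjective I z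
    have heq : Ideal.span {x₀} * D ⊔ Ideal.span {a} * I = Ideal.span {a} := by
      conv_lhs => rw [hC, ← hI]
      rw [show I * C * D ⊔ I * D * I = I * D * (C ⊔ I) by
        rw [Ideal.mul_sup]; congr 1; ring]
      rw [hCI, Ideal.mul_top, hI]
    have har : a * r ∈ Ideal.span {x₀} * D ⊔ Ideal.span {a} * I := by
      rw [heq]
      exact Ideal.mem_span_singleton.mpr ⟨r, rfl⟩
    obtain ⟨u, hu, w, hw, huw⟩ := Submodule.mem_sup.mp har
    obtain ⟨z, hzD, hzu⟩ := Ideal.mem_span_singleton_mul.mp hu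
    obtain ⟨v, hv⟩ := hDrange z hzD
    obtain ⟨i, hiI, hiw⟩ := Ideal.mem_span_singleton_mul.mp hw
    have hqv : q v = r - i := by
      apply mul_left_cancel₀ ha
      rw [← hq v, hv, hzu, mul_sub]
      linear_combination huw + hiw
    refine ⟨v, ?_⟩
    rw [hg, hqv, map_sub]
    have : I.mkQ i = 0 := by
      rw [Submodule.mkQ_apply, Submodule.Quotient.mk_eq_zero]; exact hiI
    rw [this, sub_zero]
  exact ⟨(Submodule.quotEquivOfEq _ _ hker.symm).trans
    (g.quotKerEquivOfSurjective hsurj)⟩
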